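/- A finite quiver Q satisfies the exclusive condition (every two distinct oriented cycles are vertex-disjoint) if and only if its Kronecker square Q̂ satisfies the exclusive condition. -/

import Mathlib

structure Quiv where
  V : Type
  A : Type
  s : A → V
  t : A → V

namespace Quiv

/-- The Kronecker square of a quiver. -/
def kron (Q : Quiv) : Quiv where
  V := Q.V × Q.V
  A := Q.A × Q.A
  s := fun p => (Q.s p.1, Q.s p.2)
  t := fun p => (Q.t p.1, Q.t p.2)

instance toQuiver (Q : Quiv) : Quiver Q.V :=
  ⟨fun i j => {a : Q.A // Q.s a = i ∧ Q.t a = j}⟩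

/-- Paths of length `k` from `i` to `j`. -/
def PathN (Q : Quiv) (i j : Q.V) (k : ℕ) : Type :=
  {p : Quiver.Path i j // p.length = k}

end Quiv

namespace Quiv

variable {Q : Quiv}

/-- The list of arrows traversed by a path. -/
def arrowsOf : ∀ {i j : Q.V}, Quiver.Path i j → List Q.A
  | _, _, Quiver.Path.nil => []
  | _, _, Quiver.Path.cons p a => arrowsOf p ++ [a.1]

/-- The list of vertices visited by a path. -/
def vertsOf : ∀ {i j : Q.V}, Quiver.Path i j → List Q.V
  | i, _, Quiver.Path.nil => [i]
  | _, _, Quiver.Path.cons p a => vertsOf p ++ [Q.t a.1]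

/-- An (oriented) cycle of a quiver: a nontrivial path from a vertex to itself. -/
def Cycle (Q : Quiv) : Type :=
  Σ x : Q.V, {c : Quiver.Path x x // 0 < c.length}

/-- The arrows of a cycle, as a set. -/
def Cycle.arrowSet (c : Q.Cycle) : Set Q.A := {a | a ∈ arrowsOf c.2.1}

/-- The vertices of a cycle, as a set. -/
def Cycle.vertSet (c : Q.Cycle) : Set Q.V := {v | v ∈ vertsOf c.2.1}

end Quiv

/-- The exclusive condition: any two distinct oriented cycles (i.e., cycles with different
sets of arrows) are vertex-disjoint. -/
def Quiv.Exclusive (Q : Quiv) : Prop :=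
  ∀ c d : Q.Cycle, c.arrowSet ≠ d.arrowSet → c.vertSet ∩ d.vertSet = ∅

namespace Quiv

variable {Q : Quiv}

/-- `IsTrail x l y`: the list of arrows `l` forms a walk from `x` to `y`. -/
def IsTrail (Q : Quiv) : Q.V → List Q.A → Q.V → Prop
  | x, [], y => x = y
  | x, a :: l, y => Q.s a = x ∧ Q.IsTrail (Q.t a) l y

@[simp] lemma isTrail_nil {x y : Q.V} : Q.IsTrail x [] y ↔ x = y := Iff.rfl

@[simp] lemma isTrail_cons {x y : Q.V} {a : Q.A} {l : List Q.A} :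
    Q.IsTrail x (a :: l) y ↔ Q.s a = x ∧ Q.IsTrail (Q.t a) l y := Iff.rfl

lemma isTrail_append {x y : Q.V} {l m : List Q.A} :
    Q.IsTrail x (l ++ m) y ↔ ∃ z, Q.IsTrail x l z ∧ Q.IsTrail z m y := by
  induction l generalizing x with
  | nil =>
    simp only [List.nil_append, isTrail_nil]
    constructor
    · intro h; exact ⟨x, rfl, h⟩
    · rintro ⟨z, rfl, h⟩; exact h
  | cons a l ih =>
    simp only [List.cons_append, isTrail_cons, ih]
    constructor
    · rintro ⟨h1, z, h2, h3⟩; exact ⟨z, ⟨h1, h2⟩, h3⟩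
    · rintro ⟨z, ⟨h1, h2⟩, h3⟩; exact ⟨h1, z, h2, h3⟩

lemma isTrail_arrowsOf {i j : Q.V} (p : Quiver.Path i j) : Q.IsTrail i (arrowsOf p) j := by
  induction p with
  | nil => simp [arrowsOf]
  | cons p a ih =>
    rw [arrowsOf, isTrail_append]
    exact ⟨_, ih, a.2.1, by simp [a.2.2]⟩

lemma length_arrowsOf {i j : Q.V} (p : Quiver.Path i j) :
    (arrowsOf p).length = p.length := by
  induction p with
  | nil => simp [arrowsOf]
  | cons p a ih => simp [arrowsOf, ih]

lemma vertsOf_eq {i j : Q.V} (p : Quiver.Path i j) :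
    vertsOf p = i :: (arrowsOf p).map Q.t := by
  induction p with
  | nil => simp [arrowsOf, vertsOf]
  | cons p a ih => simp [arrowsOf, vertsOf, ih]

lemma arrowsOf_comp {i j k : Q.V} (p : Quiver.Path i j) (q : Quiver.Path j k) :
    arrowsOf (p.comp q) = arrowsOf p ++ arrowsOf q := by
  induction q with
  | nil => simp [Quiver.Path.comp, arrowsOf]
  | cons q a ih => simp [Quiver.Path.comp, arrowsOf, ih]

lemma exists_path {l : List Q.A} : ∀ {x y : Q.V}, Q.IsTrail x l y →
    ∃ p : Quiver.Path x y, arrowsOf p = l := by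
  induction l with
  | nil =>
    intro x y h
    rw [isTrail_nil] at h
    subst h
    exact ⟨Quiver.Path.nil, by simp [arrowsOf]⟩
  | cons a l ih =>
    intro x y h
    obtain ⟨h1, h2⟩ := isTrail_cons.mp h
    obtain ⟨p, hp⟩ := ih h2
    refine ⟨(Quiver.Hom.toPath (⟨a, h1, rfl⟩ : x ⟶ Q.t a)).comp p, ?_⟩
    rw [arrowsOf_comp, hp]
    simp [Quiver.Hom.toPath, arrowsOf]

/-- Cycle words: nonempty closed trails. -/
def IsCW (Q : Quiv) (l : List Q.A) : Prop := l ≠ [] ∧ ∃ x, Q.IsTrail x l x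

lemma IsTrail.head_s {x y : Q.V} {l : List Q.A} (h : Q.IsTrail x l y) (hne : l ≠ []) :
    Q.s (l.head hne) = x := by
  cases l with
  | nil => exact absurd rfl hne
  | cons a l => exact h.1

lemma IsTrail.getLast_t {l : List Q.A} : ∀ {x y : Q.V}, Q.IsTrail x l y → (hne : l ≠ []) →
    Q.t (l.getLast hne) = y := by
  induction l with
  | nil => intro x y _ hne; exact absurd rfl hne
  | cons a l ih =>
    intro x y h hne
    cases l with
    | nil =>
      have : Q.t a = y := isTrail_nil.mp h.2
      simpa using this
    | cons b l => simpa using ih h.2 (by simp)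

lemma IsTrail.t_getElem {l : List Q.A} : ∀ {x y : Q.V}, Q.IsTrail x l y →
    ∀ (k : ℕ) (hk : k + 1 < l.length),
    Q.t (l[k]'(by omega)) = Q.s (l[k + 1]'hk) := by
  induction l with
  | nil => intro x y _ k hk; simp at hk
  | cons a l ih =>
    intro x y h k hk
    cases k with
    | zero =>
      have hl : l ≠ [] := by
        intro hl; rw [hl] at hk; simp at hk
      have := h.2.head_s hl
      simpa [List.getElem_cons_succ, List.getElem_zero] using this.symm
    | succ k =>
      simpa using ih h.2 k (by simpa using hk)

lemma IsCW.cyc {l : List Q.A} (h : Q.IsCW l) (k : ℕ) (hk : k < l.length) :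
    Q.t (l[k]'hk) = Q.s (l[(k + 1) % l.length]'(Nat.mod_lt _ (by omega))) := by
  obtain ⟨hne, x, ht⟩ := h
  by_cases h1 : k + 1 < l.length
  · have hm : (k + 1) % l.length = k + 1 := Nat.mod_eq_of_lt h1
    have e : l[(k + 1) % l.length]'(Nat.mod_lt _ (by omega)) = l[k + 1]'h1 :=
      getElem_congr_idx hm
    rw [e]
    exact ht.t_getElem k h1
  · have hk1 : k = l.length - 1 := by omega
    have hm : (k + 1) % l.length = 0 := by
      have : k + 1 = l.length := by omega
      rw [this, Nat.mod_self]
    have hlast : l[k]'hk = l.getLast hne := by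
      rw [List.getLast_eq_getElem]
      exact getElem_congr_idx hk1
    have hhead : l[(k + 1) % l.length]'(Nat.mod_lt _ (by omega)) = l.head hne := by
      have e : l[(k + 1) % l.length]'(Nat.mod_lt _ (by omega)) = l[0]'(by omega) :=
        getElem_congr_idx hm
      rw [e, List.getElem_zero]
    rw [hlast, hhead, ht.getLast_t hne, ht.head_s hne]

/-- Characterization of the visited vertices of a closed path. -/
lemma vert_char {x : Q.V} {l : List Q.A} (ht : Q.IsTrail x l x) (hne : l ≠ [])
    {p : Quiver.Path x x} (hp : arrowsOf p = l) (w : Q.V) :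
    w ∈ vertsOf p ↔ ∃ a ∈ l, Q.s a = w := by
  have hcw : Q.IsCW l := ⟨hne, x, ht⟩
  rw [vertsOf_eq, hp]
  simp only [List.mem_cons, List.mem_map]
  constructor
  · rintro (rfl | ⟨a, ha, rfl⟩)
    · exact ⟨l.head hne, List.head_mem hne, ht.head_s hne⟩
    · obtain ⟨k, hk, rfl⟩ := List.mem_iff_getElem.mp ha
      exact ⟨l[(k + 1) % l.length]'(Nat.mod_lt _ (by omega)), List.getElem_mem _,
        (hcw.cyc k hk).symm⟩
  · rintro ⟨a, ha, rfl⟩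
    obtain ⟨k, hk, rfl⟩ := List.mem_iff_getElem.mp ha
    cases k with
    | zero =>
      left
      rw [List.getElem_zero, ht.head_s hne]
    | succ k =>
      right
      exact ⟨l[k]'(by omega), List.getElem_mem _, ht.t_getElem k hk⟩

/-- The word form of the exclusive condition. -/
def WEx (Q : Quiv) : Prop :=
  ∀ l m : List Q.A, Q.IsCW l → Q.IsCW m → (∃ a ∈ l, ∃ b ∈ m, Q.s a = Q.s b) →
    ∀ c, c ∈ l ↔ c ∈ m

lemma Exclusive.wEx (hQ : Q.Exclusive) : Q.WEx := by
  rintro l m ⟨hlne, x, hxl⟩ ⟨hmne, y, hym⟩ ⟨a, hal, b, hbm, hab⟩ c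
  obtain ⟨p, hp⟩ := exists_path hxl
  obtain ⟨q, hq⟩ := exists_path hym
  have hppos : 0 < p.length := by
    rw [← length_arrowsOf, hp]; exact List.length_pos_iff.mpr hlne
  have hqpos : 0 < q.length := by
    rw [← length_arrowsOf, hq]; exact List.length_pos_iff.mpr hmne
  set C : Q.Cycle := ⟨x, p, hppos⟩
  set D : Q.Cycle := ⟨y, q, hqpos⟩
  by_cases hAD : C.arrowSet = D.arrowSet
  · have : ∀ e, e ∈ l ↔ e ∈ m := by
      intro e
      have := Set.ext_iff.mp hAD e
      simpa [Cycle.arrowSet, C, D, hp, hq] using this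
    exact this c
  · exfalso
    have hdisj := hQ C D hAD
    have hwC : Q.s a ∈ C.vertSet := by
      rw [Cycle.vertSet, Set.mem_setOf_eq]
      exact (vert_char hxl hlne hp _).mpr ⟨a, hal, rfl⟩
    have hwD : Q.s a ∈ D.vertSet := by
      rw [Cycle.vertSet, Set.mem_setOf_eq]
      exact (vert_char hym hmne hq _).mpr ⟨b, hbm, hab.symm⟩
    exact Set.eq_empty_iff_forall_notMem.mp hdisj _ ⟨hwC, hwD⟩

lemma WEx.exclusive (hQ : Q.WEx) : Q.Exclusive := by
  intro C D hAD
  by_contra hinter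
  obtain ⟨w, hwC, hwD⟩ := Set.nonempty_iff_ne_empty.mpr hinter
  obtain ⟨x, p, hppos⟩ := C
  obtain ⟨y, q, hqpos⟩ := D
  have hxl : Q.IsTrail x (arrowsOf p) x := isTrail_arrowsOf p
  have hym : Q.IsTrail y (arrowsOf q) y := isTrail_arrowsOf q
  have hlne : arrowsOf p ≠ [] := by
    intro h
    have := length_arrowsOf p
    rw [h] at this
    simp at this
    omega
  have hmne : arrowsOf q ≠ [] := by
    intro h
    have := length_arrowsOf q
    rw [h] at this
    simp at this
    omega
  obtain ⟨a, hal, ha⟩ := (vert_char hxl hlne rfl w).mp hwC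
  obtain ⟨b, hbm, hb⟩ := (vert_char hym hmne rfl w).mp hwD
  have := hQ (arrowsOf p) (arrowsOf q) ⟨hlne, x, hxl⟩ ⟨hmne, y, hym⟩
    ⟨a, hal, b, hbm, by rw [ha, hb]⟩
  exact hAD (Set.ext fun e => this e)

/-- Rotation of a cycle word to start at a given arrow. -/
lemma rotate_cw {l : List Q.A} {a : Q.A} (h : Q.IsCW l) (ha : a ∈ l) :
    ∃ rest, Q.IsTrail (Q.s a) (a :: rest) (Q.s a) := by
  obtain ⟨hne, x, ht⟩ := h
  obtain ⟨i, hi, rfl⟩ := List.mem_iff_getElem.mp ha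
  have hdrop : l.drop i = (l[i]'hi) :: l.drop (i + 1) := List.drop_eq_getElem_cons hi
  have ht' : Q.IsTrail x (l.take i ++ l.drop i) x := by
    rw [List.take_append_drop]; exact ht
  obtain ⟨z, h1, h2⟩ := isTrail_append.mp ht'
  rw [hdrop, isTrail_cons] at h2
  obtain ⟨hz, h3⟩ := h2
  rw [← hz] at h1
  exact ⟨l.drop (i + 1) ++ l.take i,
    isTrail_cons.mpr ⟨rfl, isTrail_append.mpr ⟨x, h3, h1⟩⟩⟩

/-- Extraction of the first-return cycle. -/
lemma extract_cw {a : Q.A} {rest : List Q.A}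
    (ht : Q.IsTrail (Q.s a) (a :: rest) (Q.s a)) :
    ∃ rest', Q.IsTrail (Q.s a) (a :: rest') (Q.s a) ∧ ∀ b ∈ rest', Q.s b ≠ Q.s a := by
  classical
  set P : Q.A → Bool := fun b => decide (Q.s b ≠ Q.s a) with hP
  refine ⟨rest.takeWhile P, ?_, ?_⟩
  · obtain ⟨h1, h2⟩ := isTrail_cons.mp ht
    rw [isTrail_cons]
    refine ⟨h1, ?_⟩
    have hsplit : rest = rest.takeWhile P ++ rest.dropWhile P :=
      (List.takeWhile_append_dropWhile (p := P) (l := rest)).symm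
    rw [hsplit] at h2
    obtain ⟨z, hz1, hz2⟩ := isTrail_append.mp h2
    rcases hd : rest.dropWhile P with _ | ⟨b, tl⟩
    · rw [hd] at hz2
      rw [isTrail_nil] at hz2
      rw [← hz2]
      exact hz1
    · have hb := List.head?_dropWhile_not P rest
      rw [hd] at hb
      simp only [List.head?_cons] at hb
      have hsb : Q.s b = Q.s a := by
        by_contra hc
        simp [hP, hc] at hb
      rw [hd] at hz2
      have h5 : Q.s b = z := (isTrail_cons.mp hz2).1
      rw [← hsb, h5]
      exact hz1
  · intro b hb
    have := List.mem_takeWhile_imp hb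
    simpa [hP] using this

/-- Determinism: in an exclusive quiver, the outgoing arrow on a cycle is unique. -/
lemma WEx.det (W : Q.WEx) {l m : List Q.A} (hl : Q.IsCW l) (hm : Q.IsCW m)
    {a b : Q.A} (hal : a ∈ l) (hbm : b ∈ m) (hab : Q.s a = Q.s b) : a = b := by
  obtain ⟨ra, hta⟩ := rotate_cw hl hal
  obtain ⟨ra', hta', hpa⟩ := extract_cw hta
  obtain ⟨rb, htb⟩ := rotate_cw hm hbm
  obtain ⟨rb', htb', _⟩ := extract_cw htb
  have hcwa : Q.IsCW (a :: ra') := ⟨by simp, _, hta'⟩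
  have hcwb : Q.IsCW (b :: rb') := ⟨by simp, _, htb'⟩
  have := W (a :: ra') (b :: rb') hcwa hcwb
    ⟨a, by simp, b, by simp, hab⟩ b
  have hba : b ∈ a :: ra' := this.mpr (by simp)
  rcases List.mem_cons.mp hba with h | h
  · exact h.symm
  · exact absurd hab.symm (hpa b h)

/-- Synchronization: two cycle words through a common source vertex in a
deterministic quiver have the same arrows. -/
lemma sync {R : Quiv}
    (D : ∀ l m : List R.A, R.IsCW l → R.IsCW m →
      ∀ a ∈ l, ∀ b ∈ m, R.s a = R.s b → a = b)
    {L M : List R.A} (hL : R.IsCW L) (hM : R.IsCW M)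
    (h : ∃ p ∈ L, ∃ q ∈ M, R.s p = R.s q) : ∀ c ∈ L, c ∈ M := by
  obtain ⟨p, hpL, q, hqM, hpq⟩ := h
  obtain ⟨i0, hi0, hp⟩ := List.mem_iff_getElem.mp hpL
  obtain ⟨j0, hj0, hq⟩ := List.mem_iff_getElem.mp hqM
  have npos : 0 < L.length := by omega
  have mpos : 0 < M.length := by omega
  have key : ∀ k : ℕ,
      L[(i0 + k) % L.length]'(Nat.mod_lt _ npos) =
      M[(j0 + k) % M.length]'(Nat.mod_lt _ mpos) := by
    intro k
    induction k with
    | zero =>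
      have e1 : L[(i0 + 0) % L.length]'(Nat.mod_lt _ npos) = L[i0]'hi0 :=
        getElem_congr_idx (by simpa using Nat.mod_eq_of_lt hi0)
      have e2 : M[(j0 + 0) % M.length]'(Nat.mod_lt _ mpos) = M[j0]'hj0 :=
        getElem_congr_idx (by simpa using Nat.mod_eq_of_lt hj0)
      rw [e1, e2]
      exact D L M hL hM _ (List.getElem_mem _) _ (List.getElem_mem _)
        (by rw [hp, hq, hpq])
    | succ k ih =>
      have eL : ((i0 + k) % L.length + 1) % L.length = (i0 + (k + 1)) % L.length := by
        rw [Nat.mod_add_mod]; ring_nf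
      have eM : ((j0 + k) % M.length + 1) % M.length = (j0 + (k + 1)) % M.length := by
        rw [Nat.mod_add_mod]; ring_nf
      have hsL := hL.cyc ((i0 + k) % L.length) (Nat.mod_lt _ npos)
      have hsM := hM.cyc ((j0 + k) % M.length) (Nat.mod_lt _ mpos)
      have eL' : L[((i0 + k) % L.length + 1) % L.length]'(Nat.mod_lt _ npos) =
          L[(i0 + (k + 1)) % L.length]'(Nat.mod_lt _ npos) := getElem_congr_idx eL
      have eM' : M[((j0 + k) % M.length + 1) % M.length]'(Nat.mod_lt _ mpos) =
          M[(j0 + (k + 1)) % M.length]'(Nat.mod_lt _ mpos) := getElem_congr_idx eM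
      rw [eL'] at hsL
      rw [eM'] at hsM
      refine D L M hL hM _ (List.getElem_mem _) _ (List.getElem_mem _) ?_
      rw [← hsL, ← hsM, ih]
  intro c hc
  obtain ⟨i, hi, rfl⟩ := List.mem_iff_getElem.mp hc
  have hk : (i0 + (i + L.length - i0)) % L.length = i := by
    have h6 : i0 + (i + L.length - i0) = i + L.length := by omega
    rw [h6, Nat.add_mod_right, Nat.mod_eq_of_lt hi]
  have h7 := key (i + L.length - i0)
  have e3 : L[(i0 + (i + L.length - i0)) % L.length]'(Nat.mod_lt _ npos) =
      L[i]'hi := getElem_congr_idx hk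
  rw [e3] at h7
  rw [h7]
  exact List.getElem_mem _

lemma isTrail_fst {L : List Q.kron.A} : ∀ {x y : Q.kron.V}, Q.kron.IsTrail x L y →
    Q.IsTrail x.1 (L.map Prod.fst) y.1 := by
  induction L with
  | nil =>
    intro x y h
    rw [isTrail_nil] at h
    subst h; exact rfl
  | cons a l ih =>
    intro x y h
    refine isTrail_cons.mpr ?_
    exact ⟨congrArg Prod.fst h.1, ih h.2⟩

lemma isTrail_snd {L : List Q.kron.A} : ∀ {x y : Q.kron.V}, Q.kron.IsTrail x L y →
    Q.IsTrail x.2 (L.map Prod.snd) y.2 := by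
  induction L with
  | nil =>
    intro x y h
    rw [isTrail_nil] at h
    subst h; exact rfl
  | cons a l ih =>
    intro x y h
    refine isTrail_cons.mpr ?_
    exact ⟨congrArg Prod.snd h.1, ih h.2⟩

lemma isTrail_diag {l : List Q.A} : ∀ {x y : Q.V}, Q.IsTrail x l y →
    Q.kron.IsTrail (x, x) (l.map fun a => (a, a)) (y, y) := by
  induction l with
  | nil =>
    intro x y h
    rw [isTrail_nil] at h
    subst h; exact rfl
  | cons a l ih =>
    intro x y h
    exact isTrail_cons.mpr
      ⟨by rw [show Q.kron.s (a, a) = (Q.s a, Q.s a) from rfl, h.1], ih h.2⟩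

lemma IsCW.fst {L : List Q.kron.A} (h : Q.kron.IsCW L) : Q.IsCW (L.map Prod.fst) := by
  obtain ⟨hne, x, ht⟩ := h
  exact ⟨fun h' => hne (List.map_eq_nil_iff.mp h'), x.1, isTrail_fst ht⟩

lemma IsCW.snd {L : List Q.kron.A} (h : Q.kron.IsCW L) : Q.IsCW (L.map Prod.snd) := by
  obtain ⟨hne, x, ht⟩ := h
  exact ⟨fun h' => hne (List.map_eq_nil_iff.mp h'), x.2, isTrail_snd ht⟩

lemma IsCW.diag {l : List Q.A} (h : Q.IsCW l) : Q.kron.IsCW (l.map fun a => (a, a)) := by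
  obtain ⟨hne, x, ht⟩ := h
  exact ⟨fun h' => hne (List.map_eq_nil_iff.mp h'), (x, x), isTrail_diag ht⟩

end Quiv

/-- A finite quiver satisfies the exclusive condition iff its Kronecker square does. -/
theorem stmt16 (Q : Quiv) [Finite Q.V] [Finite Q.A] :
    Q.Exclusive ↔ Q.kron.Exclusive := by
  constructor
  · intro h
    have W : Q.WEx := h.wEx
    apply Quiv.WEx.exclusive
    intro L M hL hM hsrc c
    have D : ∀ l m : List Q.kron.A, Q.kron.IsCW l → Q.kron.IsCW m →
        ∀ a ∈ l, ∀ b ∈ m, Q.kron.s a = Q.kron.s b → a = b := by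
      intro l m hl hm a hal b hbm hab
      have h1 : Q.s a.1 = Q.s b.1 := congrArg Prod.fst hab
      have h2 : Q.s a.2 = Q.s b.2 := congrArg Prod.snd hab
      have e1 := W.det hl.fst hm.fst (List.mem_map_of_mem (f := Prod.fst) hal)
        (List.mem_map_of_mem (f := Prod.fst) hbm) h1
      have e2 := W.det hl.snd hm.snd (List.mem_map_of_mem (f := Prod.snd) hal)
        (List.mem_map_of_mem (f := Prod.snd) hbm) h2
      exact Prod.ext e1 e2
    constructor
    · exact fun hc => Quiv.sync D hL hM hsrc c hc
    · refine fun hc => Quiv.sync D hM hL ?_ c hc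
      obtain ⟨p, hp, q, hq, hpq⟩ := hsrc
      exact ⟨q, hq, p, hp, hpq.symm⟩
  · intro h
    have W : Q.kron.WEx := h.wEx
    apply Quiv.WEx.exclusive
    rintro l m hl hm ⟨a, hal, b, hbm, hab⟩ c
    have hdiag := W (l.map fun a => (a, a)) (m.map fun a => (a, a)) hl.diag hm.diag
      ⟨(a, a), List.mem_map_of_mem hal, (b, b), List.mem_map_of_mem hbm,
        by rw [show Q.kron.s (a, a) = (Q.s a, Q.s a) from rfl,
          show Q.kron.s (b, b) = (Q.s b, Q.s b) from rfl, hab]⟩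
    constructor
    · intro hc
      have := (hdiag (c, c)).mp (List.mem_map_of_mem hc)
      obtain ⟨b', hb', he⟩ := List.mem_map.mp this
      cases he
      exact hb'
    · intro hc
      have := (hdiag (c, c)).mpr (List.mem_map_of_mem hc)
      obtain ⟨a', ha', he⟩ := List.mem_map.mp this
      cases he
      exact ha'
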